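/- The model space is not timelike Jordan Osserman: the vectors T_1 and Z_1^- := U_1 − (1/2)V_1 are both unit timelike (g(T_1, T_1) = −1 and g(Z_1^-, Z_1^-) = −1), yet J(T_1) = 0 while J(Z_1^-) ≠ 0; in particular J(T_1) and J(Z_1^-) are not similar. -/

import Mathlib

open scoped BigOperators

noncomputable section

/-- Index type for `ℝ^{3s}`: the first block indexes `U_1,…,U_s`, the second block
`T_1,…,T_s`, the third block `V_1,…,V_s`. -/
abbrev Ix (s : ℕ) := Fin s ⊕ Fin s ⊕ Fin s

/-- The vector space `ℝ^{3s}`. -/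
abbrev Vc (s : ℕ) := Ix s → ℝ

def uI {s : ℕ} (i : Fin s) : Ix s := Sum.inl i
def tI {s : ℕ} (i : Fin s) : Ix s := Sum.inr (Sum.inl i)
def vI {s : ℕ} (i : Fin s) : Ix s := Sum.inr (Sum.inr i)

/-- The standard basis vector `U_i`. -/
def Uv {s : ℕ} (i : Fin s) : Vc s := Pi.single (uI i) 1
/-- The standard basis vector `T_i`. -/
def Tv {s : ℕ} (i : Fin s) : Vc s := Pi.single (tI i) 1
/-- The standard basis vector `V_i`. -/
def Vv {s : ℕ} (i : Fin s) : Vc s := Pi.single (vI i) 1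

/-- The symmetric bilinear form `g` on `ℝ^{3s}` whose only nonzero values on the
standard basis vectors are `g(U_i,V_i) = g(V_i,U_i) = 1` and `g(T_i,T_i) = -1`. -/
def gM (s : ℕ) (x y : Vc s) : ℝ :=
  ∑ i, (x (uI i) * y (vI i) + x (vI i) * y (uI i) - x (tI i) * y (tI i))

/-- The 4-linear form `R` on `ℝ^{3s}` determined by the `ℤ₂`-symmetries
`R(x,y,z,w) = R(z,w,x,y) = -R(y,x,z,w)` and whose nonzero values on the standard
basis vectors, up to those symmetries, are `R(U_i,U_j,U_j,T_i) = 1` for `i ≠ j`.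
(The eight summands below are precisely the full `ℤ₂`-orbit of the generating
components; the summands cancel in pairs when `i = j`.) -/
def RM (s : ℕ) (x y z w : Vc s) : ℝ :=
  ∑ i, ∑ j,
    (x (uI i) * y (uI j) * z (uI j) * w (tI i)
     - x (uI j) * y (uI i) * z (uI j) * w (tI i)
     - x (uI i) * y (uI j) * z (tI i) * w (uI j)
     + x (uI j) * y (uI i) * z (tI i) * w (uI j)
     + x (uI j) * y (tI i) * z (uI i) * w (uI j)
     - x (tI i) * y (uI j) * z (uI i) * w (uI j)
     - x (uI j) * y (tI i) * z (uI j) * w (uI i)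
     + x (tI i) * y (uI j) * z (uI j) * w (uI i))

/-- `Z_i^+ = U_i + (1/2) V_i`. -/
def Zp {s : ℕ} (i : Fin s) : Vc s := Uv i + (2⁻¹ : ℝ) • Vv i
/-- `Z_i^- = U_i - (1/2) V_i`. -/
def Zm {s : ℕ} (i : Fin s) : Vc s := Uv i - (2⁻¹ : ℝ) • Vv i

/- In the theorems below, the Jacobi operator is taken as a function
`J : ℝ^{3s} → End(ℝ^{3s})` together with the hypothesis that it satisfies its defining
property `g(J(x)y, w) = R(y,x,x,w)` for all `x, y, w`; since `g` is nondegenerate this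
characterizes `J` uniquely. -/

lemma Uv_u {s} (i j : Fin s) : Uv i (uI j) = if j = i then 1 else 0 := by
  simp [Uv, uI, Pi.single_apply]
lemma Uv_t {s} (i j : Fin s) : Uv i (tI j) = 0 := by simp [Uv, uI, tI, Pi.single_apply]
lemma Uv_v {s} (i j : Fin s) : Uv i (vI j) = 0 := by simp [Uv, uI, vI, Pi.single_apply]
lemma Tv_t {s} (i j : Fin s) : Tv i (tI j) = if j = i then 1 else 0 := by
  simp [Tv, tI, Pi.single_apply]
lemma Tv_u {s} (i j : Fin s) : Tv i (uI j) = 0 := by simp [Tv, uI, tI, Pi.single_apply]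
lemma Tv_v {s} (i j : Fin s) : Tv i (vI j) = 0 := by simp [Tv, vI, tI, Pi.single_apply]
lemma Vv_v {s} (i j : Fin s) : Vv i (vI j) = if j = i then 1 else 0 := by
  simp [Vv, vI, Pi.single_apply]
lemma Vv_u {s} (i j : Fin s) : Vv i (uI j) = 0 := by simp [Vv, uI, vI, Pi.single_apply]
lemma Vv_t {s} (i j : Fin s) : Vv i (tI j) = 0 := by simp [Vv, tI, vI, Pi.single_apply]

lemma Zm_u {s} (i j : Fin s) : Zm i (uI j) = if j = i then 1 else 0 := by
  simp [Zm, Uv_u, Vv_u]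
lemma Zm_t {s} (i j : Fin s) : Zm i (tI j) = 0 := by simp [Zm, Uv_t, Vv_t]
lemma Zm_v {s} (i j : Fin s) : Zm i (vI j) = if j = i then -(2⁻¹ : ℝ) else 0 := by
  simp [Zm, Uv_v, Vv_v]; split <;> simp

lemma gM_Uv {s} (x : Vc s) (i : Fin s) : gM s x (Uv i) = x (vI i) := by
  simp [gM, Uv_u, Uv_t, Uv_v, mul_ite, Finset.sum_ite_eq]
lemma gM_Vv {s} (x : Vc s) (i : Fin s) : gM s x (Vv i) = x (uI i) := by
  simp [gM, Vv_u, Vv_t, Vv_v, mul_ite, Finset.sum_ite_eq]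
lemma gM_Tv {s} (x : Vc s) (i : Fin s) : gM s x (Tv i) = -x (tI i) := by
  simp [gM, Tv_u, Tv_t, Tv_v, mul_ite, Finset.sum_ite_eq]

lemma gM_nondeg {s} {x : Vc s} (h : ∀ w, gM s x w = 0) : x = 0 := by
  funext k
  rcases k with i | i | i
  · have := h (Vv i); rw [gM_Vv] at this; exact this
  · have := h (Tv i); rw [gM_Tv] at this; simpa [tI] using this
  · have := h (Uv i); rw [gM_Uv] at this; exact this

lemma RM_T {s} (i : Fin s) (y w : Vc s) : RM s y (Tv i) (Tv i) w = 0 := by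
  simp [RM, Tv_u]

/-- the model space is not timelike Jordan Osserman: `T_1` and
`Z_1^- = U_1 - (1/2)V_1` are both unit timelike, yet `J(T_1) = 0` while
`J(Z_1^-) ≠ 0`; in particular `J(T_1)` and `J(Z_1^-)` are not similar. -/
theorem stmt6 (s : ℕ) (hs : 2 ≤ s)
    (J : Vc s → Module.End ℝ (Vc s))
    (hJ : ∀ x y w : Vc s, gM s (J x y) w = RM s y x x w) :
    gM s (Tv ⟨0, by omega⟩) (Tv ⟨0, by omega⟩) = -1 ∧
    gM s (Zm ⟨0, by omega⟩) (Zm ⟨0, by omega⟩) = -1 ∧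
    J (Tv ⟨0, by omega⟩) = 0 ∧
    J (Zm ⟨0, by omega⟩) ≠ 0 ∧
    ¬ ∃ P : Vc s ≃ₗ[ℝ] Vc s, ∀ y : Vc s,
        J (Zm ⟨0, by omega⟩) y = P (J (Tv ⟨0, by omega⟩) (P.symm y)) := by
  set i0 : Fin s := ⟨0, by omega⟩
  set i1 : Fin s := ⟨1, by omega⟩
  have hne : i1 ≠ i0 := by simp [i0, i1, Fin.ext_iff]
  have hJT : J (Tv i0) = 0 := by
    apply LinearMap.ext; intro y
    have : J (Tv i0) y = 0 := gM_nondeg (fun w => by rw [hJ, RM_T])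
    simpa using this
  have hval : gM s (J (Zm i0) (Uv i1)) (Tv i1) = 1 := by
    rw [hJ]
    simp only [RM, Uv_u, Uv_t, Uv_v, Zm_u, Zm_t, Zm_v, Tv_u, Tv_t, Tv_v,
      mul_zero, zero_mul, mul_ite, ite_mul, one_mul, mul_one, sub_zero, add_zero,
      zero_add, zero_sub, sub_neg_eq_add, neg_zero]
    rw [Finset.sum_eq_single i1, Finset.sum_eq_single i0] <;>
      intros <;> simp_all [Finset.sum_ite_eq, hne]
  have hJZ : J (Zm i0) ≠ 0 := by
    intro h
    rw [h] at hval
    simp [gM] at hval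
  refine ⟨?_, ?_, hJT, hJZ, ?_⟩
  · rw [gM_Tv, Tv_t]; simp
  · simp only [gM, Zm_u, Zm_t, Zm_v, mul_ite, ite_mul, mul_zero, zero_mul, mul_one,
      one_mul, sub_zero]
    rw [Finset.sum_eq_single i0] <;> intros <;> simp_all <;> norm_num
  · rintro ⟨P, hP⟩
    apply hJZ
    apply LinearMap.ext; intro y
    have := hP y
    rw [hJT] at this
    simpa using this
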